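/- For n ≥ 0, the number of sequences (v_1, ..., v_n) with 1 ≤ v_i ≤ i for all i, satisfying for all 1 ≤ i < j ≤ n that v_j − (j − i) ∉ [1, v_i − 1], equals the Catalan number C_n = (1/(n+1)) * binomial(2n, n). -/

import Mathlib

def gc (n k : ℕ) : ℚ := ((k : ℚ) + 1) / (2 * (n : ℚ) + (k : ℚ) + 1) * ((2 * n + k + 1).choose n : ℚ)

def cat (n : ℕ) : ℚ := 1 / ((n : ℚ) + 1) * ((2 * n).choose n : ℚ)

def Cond {n : ℕ} (u : Fin n → ℕ) : Prop :=
  ∀ i j : Fin n, i < j →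
    ¬(1 ≤ (u j : ℤ) - (((j : ℕ) : ℤ) - ((i : ℕ) : ℤ)) ∧
      (u j : ℤ) - (((j : ℕ) : ℤ) - ((i : ℕ) : ℤ)) ≤ (u i : ℤ) - 1)

/-! ### Auxiliary development -/

/-- The set of valid next values appendable to `l`. -/
def ES (l : List ℕ) : Finset ℕ :=
  (Finset.range (l.length + 1)).filter
    (fun k => ∀ i ∈ Finset.range l.length, k ≤ i → k ≤ l.getD i 0)

/-- The set of valid sequences of length `n`. -/
def S : ℕ → Finset (List ℕ)
  | 0 => {[]}
  | n+1 => (S n).biUnion fun l => (ES l).image fun k => l ++ [k]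

lemma mem_ES {l : List ℕ} {k : ℕ} :
    k ∈ ES l ↔ k ≤ l.length ∧ ∀ i ∈ Finset.range l.length, k ≤ i → k ≤ l.getD i 0 := by
  simp [ES, Nat.lt_succ_iff]

lemma length_mem_ES (l : List ℕ) : l.length ∈ ES l := by
  rw [mem_ES]
  refine ⟨le_rfl, fun i hi hki => ?_⟩
  simp only [Finset.mem_range] at hi; omega

lemma zero_mem_ES (l : List ℕ) : 0 ∈ ES l := by
  rw [mem_ES]; exact ⟨Nat.zero_le _, fun i _ _ => Nat.zero_le _⟩

lemma card_ES_le (l : List ℕ) : (ES l).card ≤ l.length + 1 := by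
  calc (ES l).card ≤ (Finset.range (l.length + 1)).card := Finset.card_le_card (Finset.filter_subset _ _)
  _ = l.length + 1 := Finset.card_range _

lemma two_le_card_ES {l : List ℕ} (hl : l.length ≠ 0) : 2 ≤ (ES l).card := by
  have h0 : 0 ∈ ES l := zero_mem_ES l
  have h1 : l.length ∈ ES l := length_mem_ES l
  have : ({0, l.length} : Finset ℕ) ⊆ ES l := by
    intro x hx; simp only [Finset.mem_insert, Finset.mem_singleton] at hx
    rcases hx with rfl | rfl <;> assumption
  calc 2 = ({0, l.length} : Finset ℕ).card := by
        rw [Finset.card_insert_of_notMem (by simpa using (Ne.symm hl)), Finset.card_singleton]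
  _ ≤ (ES l).card := Finset.card_le_card this

lemma length_of_mem_S {n : ℕ} {l : List ℕ} (h : l ∈ S n) : l.length = n := by
  induction n generalizing l with
  | zero => simp [S] at h; simp [h]
  | succ n ih =>
    simp only [S, Finset.mem_biUnion, Finset.mem_image] at h
    obtain ⟨l', hl', k, _, rfl⟩ := h
    simp [ih hl']

lemma ES_append (l : List ℕ) (k : ℕ) :
    ES (l ++ [k]) = insert (l.length + 1) ((ES l).filter (· ≤ k)) := by
  ext m
  simp only [mem_ES, List.length_append, List.length_singleton, Finset.mem_range,
    Finset.mem_insert, Finset.mem_filter]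
  constructor
  · rintro ⟨hm, hcond⟩
    rcases Nat.eq_or_lt_of_le hm with rfl | hlt
    · exact Or.inl rfl
    · have hmn : m ≤ l.length := by omega
      refine Or.inr ⟨⟨hmn, fun i hi hmi => ?_⟩, ?_⟩
      · have := hcond i (by omega) hmi
        rwa [List.getD_append _ _ _ _ hi] at this
      · have := hcond l.length (by omega) hmn
        simpa using this
  · rintro (rfl | ⟨⟨hmn, hcond⟩, hmk⟩)
    · exact ⟨le_rfl, fun i hi hmi => by omega⟩
    · refine ⟨by omega, fun i hi hmi => ?_⟩
      rcases Nat.lt_or_ge i l.length with hil | hil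
      · rw [List.getD_append _ _ _ _ hil]; exact hcond i hil hmi
      · have : i = l.length := by omega
        subst this; simpa

lemma card_ES_append (l : List ℕ) (k : ℕ) :
    (ES (l ++ [k])).card = ((ES l).filter (· ≤ k)).card + 1 := by
  rw [ES_append, Finset.card_insert_of_notMem]
  intro h
  have h2 := (Finset.mem_filter.mp h).1
  have := (mem_ES.mp h2).1
  omega

lemma rank_eq (F : Finset ℕ) (e : Fin F.card ≃o {x // x ∈ F}) (k : ℕ) (hk : k ∈ F) :
    (F.filter (· ≤ k)).card = (e.symm ⟨k, hk⟩ : ℕ) + 1 := by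
  have himg : F.filter (· ≤ k) = (Finset.Iic (e.symm ⟨k, hk⟩)).image (fun i => (e i : ℕ)) := by
    ext x
    simp only [Finset.mem_filter, Finset.mem_image, Finset.mem_Iic]
    constructor
    · rintro ⟨hxF, hxk⟩
      refine ⟨e.symm ⟨x, hxF⟩, ?_, by simp⟩
      have : (⟨x, hxF⟩ : {x // x ∈ F}) ≤ ⟨k, hk⟩ := hxk
      exact e.symm.monotone this
    · rintro ⟨i, hi, rfl⟩
      refine ⟨(e i).2, ?_⟩
      have : e i ≤ e (e.symm ⟨k, hk⟩) := e.monotone hi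
      rw [OrderIso.apply_symm_apply] at this; exact this
  rw [himg, Finset.card_image_of_injective _ (fun a b hab => e.injective (Subtype.ext hab)),
    Fin.card_Iic]

lemma rank_lemma (F : Finset ℕ) (j : ℕ) :
    ((F.filter fun k => (F.filter (· ≤ k)).card = j + 1).card) =
      if j + 1 ≤ F.card then 1 else 0 := by
  have e := F.orderIsoOfFin rfl
  split_ifs with hj
  · rw [Finset.card_eq_one]
    refine ⟨(e ⟨j, by omega⟩ : ℕ), ?_⟩
    ext k
    simp only [Finset.mem_filter, Finset.mem_singleton]
    constructor
    · rintro ⟨hkF, hrank⟩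
      rw [rank_eq F e k hkF] at hrank
      have : e.symm ⟨k, hkF⟩ = ⟨j, by omega⟩ := by
        apply Fin.ext; simp only [Fin.val_mk]; omega
      have := congrArg e this
      simp only [OrderIso.apply_symm_apply] at this
      rw [← this]
    · rintro rfl
      refine ⟨(e ⟨j, by omega⟩).2, ?_⟩
      rw [rank_eq F e _ (e ⟨j, by omega⟩).2]
      congr 1
      have : e.symm ⟨(e ⟨j, by omega⟩ : ℕ), (e ⟨j, by omega⟩).2⟩ = ⟨j, by omega⟩ := by
        rw [show (⟨(e ⟨j, by omega⟩ : ℕ), (e ⟨j, by omega⟩).2⟩ : {x // x ∈ F}) = e ⟨j, by omega⟩ from rfl]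
        simp
      rw [this]
  · rw [Finset.card_eq_zero]
    rw [Finset.filter_eq_empty_iff]
    intro k hkF
    rw [rank_eq F e k hkF]
    have := (e.symm ⟨k, hkF⟩).2
    omega

def Nd (n d : ℕ) : ℕ := ((S n).filter fun l => (ES l).card = d).card

lemma append_injective (l : List ℕ) : Function.Injective (fun k => l ++ [k]) := by
  intro a b hab
  simpa using List.append_cancel_left hab

lemma step (n d : ℕ) :
    Nd (n+1) (d+2) = ((S n).filter fun l => d + 1 ≤ (ES l).card).card := by
  unfold Nd
  rw [show S (n+1) = (S n).biUnion (fun l => (ES l).image fun k => l ++ [k]) from rfl]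
  rw [Finset.filter_biUnion]
  rw [Finset.card_biUnion]
  · have inner : ∀ l ∈ S n,
        (Finset.filter (fun l' => (ES l').card = d + 2) ((ES l).image fun k => l ++ [k])).card
          = if d + 1 ≤ (ES l).card then 1 else 0 := by
      intro l _
      rw [Finset.filter_image, Finset.card_image_of_injective _ (append_injective l)]
      have : Finset.filter (fun k => (ES (l ++ [k])).card = d + 2) (ES l)
          = Finset.filter (fun k => ((ES l).filter (· ≤ k)).card = d + 1) (ES l) := by
        apply Finset.filter_congr
        intro k _
        rw [card_ES_append]
        constructor <;> omega
      rw [this, rank_lemma]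
    rw [Finset.sum_congr rfl inner]
    rw [← Finset.card_filter]
  · -- pairwise disjointness
    intro x hx y hy hxy
    apply Finset.disjoint_left.mpr
    intro a hax hay
    have hax' := Finset.mem_of_mem_filter _ hax
    have hay' := Finset.mem_of_mem_filter _ hay
    simp only [Finset.mem_image] at hax' hay'
    obtain ⟨k, _, rfl⟩ := hax'
    obtain ⟨k', _, he⟩ := hay'
    apply hxy
    have hlx := length_of_mem_S hx
    have hly := length_of_mem_S hy
    have : (y ++ [k']).take n = (x ++ [k]).take n := by rw [he]
    rw [List.take_left' hly, List.take_left' hlx] at this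
    exact this.symm

lemma Nd_zero_of_large {n d : ℕ} (h : n + 2 ≤ d) : Nd n d = 0 := by
  unfold Nd
  rw [Finset.card_eq_zero, Finset.filter_eq_empty_iff]
  intro l hl
  have h1 := card_ES_le l
  rw [length_of_mem_S hl] at h1
  omega

lemma Nd_small {n d : ℕ} (hn : 1 ≤ n) (hd : d ≤ 1) : Nd n d = 0 := by
  unfold Nd
  rw [Finset.card_eq_zero, Finset.filter_eq_empty_iff]
  intro l hl
  have h1 := two_le_card_ES (l := l) (by rw [length_of_mem_S hl]; omega)
  omega

lemma Nd_rec (n d : ℕ) : Nd (n+1) (d+2) = Nd (n+1) (d+3) + Nd n (d+1) := by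
  rw [step n d, show d+3 = (d+1)+2 from rfl, step n (d+1)]
  unfold Nd
  rw [Finset.card_filter, Finset.card_filter, Finset.card_filter, ← Finset.sum_add_distrib]
  apply Finset.sum_congr rfl
  intro l _
  split_ifs <;> omega

noncomputable def f (n d : ℕ) : ℚ :=
  if 2 ≤ d ∧ d ≤ n + 1 then ((2*n-d).choose (n+1-d) : ℚ) - ((2*n-d).choose n : ℚ) else 0

lemma f_zero {n d : ℕ} (h : n + 2 ≤ d) : f n d = 0 := by
  unfold f; rw [if_neg]; omega

lemma f_pascal {n d : ℕ} (hn : 1 ≤ n) (hd2 : 2 ≤ d) (hdn : d ≤ n + 2) :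
    f (n+1) d = f (n+1) (d+1) + (if 3 ≤ d then f n (d-1) else 0) := by
  rcases Nat.lt_or_ge d (n+2) with hlt | hge
  · -- 2 ≤ d ≤ n+1
    rcases Nat.lt_or_ge d 3 with hd3 | hd3
    · -- d = 2
      have hd : d = 2 := by omega
      subst hd
      obtain ⟨s, rfl⟩ : ∃ s, n = s + 1 := ⟨n - 1, by omega⟩
      rw [if_neg (by omega)]
      unfold f
      rw [if_pos (by omega), if_pos (by omega)]
      have e1 : 2*(s+1+1) - 2 = 2*s+2 := by omega
      have e2 : (s+1+1)+1 - 2 = s+1 := by omega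
      have e3 : 2*(s+1+1) - 3 = 2*s+1 := by omega
      have e4 : (s+1+1)+1 - 3 = s := by omega
      rw [e1, e2, e3, e4]
      have p1 : (2*s+2).choose (s+1) = (2*s+1).choose s + (2*s+1).choose (s+1) := by
        rw [show 2*s+2 = (2*s+1)+1 from rfl]; exact Nat.choose_succ_succ _ _
      have p2 : (2*s+2).choose (s+1+1) = (2*s+1).choose (s+1) + (2*s+1).choose (s+2) := by
        rw [show 2*s+2 = (2*s+1)+1 from rfl]; exact Nat.choose_succ_succ _ _
      have e5 : s+1+1 = s+2 := rfl
      rw [e5] at p2 ⊢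
      push_cast [p1, p2]
      ring
    · -- 3 ≤ d ≤ n+1
      obtain ⟨e, rfl⟩ : ∃ e, d = e + 3 := ⟨d - 3, by omega⟩
      obtain ⟨s, rfl⟩ : ∃ s, n = e + s + 2 := ⟨n - e - 2, by omega⟩
      rw [if_pos (by omega)]
      unfold f
      rw [if_pos (by omega), if_pos (by omega), if_pos (by omega)]
      have e1 : 2*(e+s+2+1) - (e+3) = e+2*s+3 := by omega
      have e2 : (e+s+2+1)+1 - (e+3) = s+1 := by omega
      have e3 : 2*(e+s+2+1) - (e+3+1) = e+2*s+2 := by omega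
      have e4 : (e+s+2+1)+1 - (e+3+1) = s := by omega
      have e5 : 2*(e+s+2) - (e+3-1) = e+2*s+2 := by omega
      have e6 : (e+s+2)+1 - (e+3-1) = s+1 := by omega
      have e7 : e+s+2+1 = e+s+3 := rfl
      have e8 : e+3-1 = e+2 := by omega
      rw [e1, e2, e3, e4, e5, e6, e7]
      have p1 : (e+2*s+3).choose (s+1) = (e+2*s+2).choose s + (e+2*s+2).choose (s+1) := by
        rw [show e+2*s+3 = (e+2*s+2)+1 from rfl]; exact Nat.choose_succ_succ _ _
      have p2 : (e+2*s+3).choose (e+s+3) = (e+2*s+2).choose (e+s+2) + (e+2*s+2).choose (e+s+3) := by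
        rw [show e+2*s+3 = (e+2*s+2)+1 from rfl, show e+s+3 = (e+s+2)+1 from rfl]
        exact Nat.choose_succ_succ _ _
      push_cast [p1, p2]
      ring
  · -- d = n + 2
    have hd : d = n + 2 := by omega
    subst hd
    rw [if_pos (by omega)]
    unfold f
    rw [if_pos (by omega), if_neg (by omega), if_pos (by omega)]
    have e1 : 2*(n+1) - (n+2) = n := by omega
    have e2 : (n+1)+1 - (n+2) = 0 := by omega
    have e3 : 2*n - (n+2-1) = n - 1 := by omega
    have e4 : n+1 - (n+2-1) = 0 := by omega
    rw [e1, e2, e3, e4]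
    have c1 : (n).choose (n+1) = 0 := Nat.choose_eq_zero_of_lt (by omega)
    have c2 : (n-1).choose n = 0 := Nat.choose_eq_zero_of_lt (by omega)
    rw [c1, c2]
    norm_num

lemma S_one : S 1 = {[0]} := by decide

lemma ES_zero_card : (ES [0]).card = 2 := by decide

lemma main_count : ∀ n d, 2 ≤ d → (Nd (n+1) d : ℚ) = f (n+1) d := by
  intro n
  induction n with
  | zero =>
    intro d hd
    have hNd : Nd 1 d = if 2 = d then 1 else 0 := by
      unfold Nd
      rw [S_one, Finset.filter_singleton]
      rw [ES_zero_card]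
      split_ifs <;> simp
    rcases Nat.eq_or_lt_of_le hd with rfl | hd3
    · rw [hNd, if_pos rfl]
      unfold f
      rw [if_pos (by omega)]
      norm_num
    · rw [hNd, if_neg (by omega), f_zero (by omega)]
      norm_num
  | succ n ih =>
    have key : ∀ t d, n + 4 ≤ d + t → 2 ≤ d → (Nd (n+2) d : ℚ) = f (n+2) d := by
      intro t
      induction t with
      | zero =>
        intro d hdt hd2
        rw [Nd_zero_of_large (by omega), f_zero (by omega)]
        norm_num
      | succ t iht =>
        intro d hdt hd2
        rcases Nat.lt_or_ge d (n+4) with hlt | hge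
        · obtain ⟨d', rfl⟩ : ∃ d', d = d' + 2 := ⟨d - 2, by omega⟩
          rw [show n + 2 = (n+1) + 1 from rfl, Nd_rec (n+1) d']
          push_cast
          rw [show d' + 3 = (d'+2) + 1 from rfl]
          rw [iht (d'+2+1) (by omega) (by omega)]
          have hright : ((Nd (n+1) (d'+1) : ℚ)) = if 3 ≤ d'+2 then f (n+1) (d'+2-1) else 0 := by
            rcases Nat.lt_or_ge (d'+1) 2 with h1 | h2
            · rw [if_neg (by omega), Nd_small (by omega) (by omega)]
              norm_num
            · rw [if_pos (by omega), show d'+2-1 = d'+1 from rfl, ih (d'+1) h2]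
          rw [hright, show (n+1)+1 = n+2 from rfl]
          exact (f_pascal (by omega) (by omega) (by omega)).symm
        · rw [Nd_zero_of_large (by omega), f_zero (by omega)]
          norm_num
    intro d hd
    exact key (n+4) d (by omega) hd

lemma card_S_eq (n : ℕ) : ((S n).card : ℚ) = ((2*n).choose n : ℚ) - ((2*n).choose (n+1) : ℚ) := by
  have h1 : Nd (n+1) 2 = (S n).card := by
    rw [show (2 : ℕ) = 0 + 2 from rfl, step n 0]
    congr 1
    apply Finset.filter_true_of_mem
    intro l _
    have : l.length ∈ ES l := length_mem_ES l
    have := Finset.card_pos.mpr ⟨_, this⟩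
    omega
  have h2 := main_count n 2 (le_refl 2)
  rw [h1] at h2
  rw [h2]
  unfold f
  rw [if_pos (by omega)]
  congr 2 <;> omega

lemma mem_S_iff {n : ℕ} {l : List ℕ} :
    l ∈ S n ↔ l.length = n ∧ (∀ i ∈ Finset.range n, l.getD i 0 ≤ i) ∧
      (∀ i j : ℕ, i < j → j < n → l.getD j 0 ≤ i → l.getD j 0 ≤ l.getD i 0) := by
  induction n generalizing l with
  | zero =>
    simp only [S, Finset.mem_singleton, List.length_eq_zero_iff]
    constructor
    · rintro rfl; exact ⟨rfl, by simp, by omega⟩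
    · rintro ⟨h, -, -⟩; exact h
  | succ n ih =>
    simp only [S, Finset.mem_biUnion, Finset.mem_image]
    constructor
    · rintro ⟨l', hl', k, hk, rfl⟩
      have hlen : l'.length = n := length_of_mem_S hl'
      obtain ⟨-, hb, hp⟩ := ih.mp hl'
      obtain ⟨hk1, hk2⟩ := mem_ES.mp hk
      rw [hlen] at hk1 hk2
      have hgetD : ∀ i < n, (l' ++ [k]).getD i 0 = l'.getD i 0 := by
        intro i hi
        exact List.getD_append _ _ _ _ (by omega)
      have hgetDn : (l' ++ [k]).getD n 0 = k := by
        rw [← hlen]; simp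
      refine ⟨by simp [hlen], ?_, ?_⟩
      · intro i hi
        simp only [Finset.mem_range] at hi
        rcases Nat.lt_or_ge i n with h' | h'
        · rw [hgetD i h']; exact hb i (Finset.mem_range.mpr h')
        · have : i = n := by omega
          subst this; rw [hgetDn]; exact hk1
      · intro i j hij hj hle
        rcases Nat.lt_or_ge j n with h' | h'
        · rw [hgetD j h'] at hle ⊢
          rw [hgetD i (by omega)]
          exact hp i j hij h' hle
        · have : j = n := by omega
          subst this
          rw [hgetDn] at hle ⊢
          rw [hgetD i hij]
          exact hk2 i (Finset.mem_range.mpr hij) hle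
    · rintro ⟨hlen, hb, hp⟩
      rcases List.eq_nil_or_concat l with rfl | ⟨l', k, rfl⟩
      · simp at hlen
      · rw [List.concat_eq_append] at hlen hb hp ⊢
        have hlen' : l'.length = n := by simpa using hlen
        have hgetD : ∀ i < n, (l' ++ [k]).getD i 0 = l'.getD i 0 := by
          intro i hi
          exact List.getD_append _ _ _ _ (by omega)
        have hgetDn : (l' ++ [k]).getD n 0 = k := by
          rw [← hlen']; simp
        refine ⟨l', ?_, k, ?_, rfl⟩
        · rw [ih]
          refine ⟨hlen', ?_, ?_⟩
          · intro i hi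
            have hi' := Finset.mem_range.mp hi
            have := hb i (Finset.mem_range.mpr (by omega))
            rwa [hgetD i (by omega)] at this
          · intro i j hij hj hle
            have := hp i j hij (by omega) (by rwa [hgetD j (by omega)])
            rwa [hgetD j (by omega), hgetD i (by omega)] at this
        · rw [mem_ES, hlen']
          constructor
          · have := hb n (Finset.mem_range.mpr (by omega))
            rwa [hgetDn] at this
          · intro i hi hki
            have hi' := Finset.mem_range.mp hi
            have := hp i n hi' (by omega) (by rwa [hgetDn])
            rwa [hgetDn, hgetD i hi'] at this

def FL {n : ℕ} (v : Fin n → ℕ) : List ℕ := List.ofFn (fun i => (i : ℕ) + 1 - v i)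

lemma length_FL {n : ℕ} (v : Fin n → ℕ) : (FL v).length = n := by simp [FL]

lemma getD_FL {n : ℕ} (v : Fin n → ℕ) (i : ℕ) (h : i < n) :
    (FL v).getD i 0 = i + 1 - v ⟨i, h⟩ := by
  rw [FL, List.getD_eq_getElem _ _ (by simpa using h), List.getElem_ofFn]

theorem stmt5 (n : ℕ) :
    ({v : Fin n → ℕ | (∀ i : Fin n, 1 ≤ v i ∧ v i ≤ (i : ℕ) + 1) ∧ Cond v}.ncard : ℚ)
      = cat n := by
  set T := {v : Fin n → ℕ | (∀ i : Fin n, 1 ≤ v i ∧ v i ≤ (i : ℕ) + 1) ∧ Cond v} with hT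
  have hinj : Set.InjOn (FL (n := n)) T := by
    intro v hv w hw hvw
    funext i
    have heq : (FL v).getD (i : ℕ) 0 = (FL w).getD (i : ℕ) 0 := by rw [hvw]
    rw [getD_FL v _ i.isLt, getD_FL w _ i.isLt] at heq
    have h1 := hv.1 i
    have h2 := hw.1 i
    rw [Fin.eta] at heq
    omega
  have himg : FL '' T = ↑(S n) := by
    ext l
    simp only [Set.mem_image, Finset.coe_sort_coe, Finset.mem_coe]
    constructor
    · rintro ⟨v, hv, rfl⟩
      rw [mem_S_iff]
      refine ⟨length_FL v, ?_, ?_⟩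
      · intro i hi
        have hi' := Finset.mem_range.mp hi
        rw [getD_FL v i hi']
        have hb := hv.1 ⟨i, hi'⟩
        simp only [Fin.val_mk] at hb
        omega
      · intro i j hij hj hle
        have hi' : i < n := by omega
        rw [getD_FL v j hj] at hle ⊢
        rw [getD_FL v i hi']
        have hC := hv.2 ⟨i, hi'⟩ ⟨j, hj⟩ (by simpa [Fin.lt_def] using hij)
        have hbi := hv.1 ⟨i, hi'⟩
        have hbj := hv.1 ⟨j, hj⟩
        simp only [Fin.val_mk] at hC hbi hbj
        omega
    · intro hl
      obtain ⟨hlen, hb, hp⟩ := mem_S_iff.mp hl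
      refine ⟨fun i => (i : ℕ) + 1 - l.getD (i : ℕ) 0, ⟨?_, ?_⟩, ?_⟩
      · intro i
        have := hb (i : ℕ) (Finset.mem_range.mpr i.isLt)
        constructor
        · simp only; omega
        · simp only; omega
      · intro i j hij
        have hij' : (i : ℕ) < (j : ℕ) := hij
        have hbi := hb (i : ℕ) (Finset.mem_range.mpr i.isLt)
        have hbj := hb (j : ℕ) (Finset.mem_range.mpr j.isLt)
        have hp' := hp (i : ℕ) (j : ℕ) hij' j.isLt
        simp only
        omega
      · apply List.ext_getElem (by simp [length_FL, hlen])
        intro i h1 h2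
        have hi' : i < n := by have := length_FL (fun i : Fin n => (i : ℕ) + 1 - l.getD (i : ℕ) 0); omega
        have hbi := hb i (Finset.mem_range.mpr hi')
        have := getD_FL (fun i => (i : ℕ) + 1 - l.getD (i : ℕ) 0) i hi'
        rw [List.getD_eq_getElem _ _ h1] at this
        rw [this]
        simp only [Fin.val_mk]
        rw [← List.getD_eq_getElem l 0 h2]
        omega
  have hcard : T.ncard = (S n).card := by
    rw [← Set.ncard_coe_finset, ← himg, Set.ncard_image_of_injOn hinj]
  rw [hcard, card_S_eq]
  unfold cat
  have key : ((2*n).choose (n+1) : ℚ) * ((n : ℚ) + 1) = ((2*n).choose n : ℚ) * (n : ℚ) := by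
    have h := Nat.choose_succ_right_eq (2*n) n
    rw [show 2*n - n = n by omega] at h
    exact_mod_cast congrArg (Nat.cast : ℕ → ℚ) h
  have hn1 : ((n : ℚ) + 1) ≠ 0 := by positivity
  field_simp
  ring_nf
  ring_nf at key
  linarith
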